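/- Fix a real p > 1, UB > 0, and positive integers k ≤ m. Let p_1,…,p_n > 0 be job sizes whose total size is at most k·UB; call a job huge if its size is greater than 2·UB. Let S be a subset of {k, k+1, …, m} and, for each κ ∈ S, let C_κ > 0. Suppose there exists a partition of the jobs into m bags such that for every κ ∈ S the bags can be assigned to κ machines with machine-load vector of ℓ_p norm at most C_κ. Then there exists a partition of the jobs into m bags with the same property in which, moreover, every huge job is alone in its bag and every bag not containing a huge job has total size at most 4·UB. -/

import Mathlib

open Finset

private lemma slope_ineq {pp : ℝ} (hpp : 1 ≤ pp) {s t δ : ℝ} (hs : 0 ≤ s) (hst : s ≤ t)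
    (hδ : 0 ≤ δ) : (s + δ) ^ pp + t ^ pp ≤ s ^ pp + (t + δ) ^ pp := by
  have hconv : ConvexOn ℝ (Set.Ici (0:ℝ)) fun x : ℝ => x ^ pp := convexOn_rpow hpp
  rcases eq_or_lt_of_le (by linarith : s ≤ t + δ) with h | h
  · have ht : t = s := by linarith
    have hδ0 : δ = 0 := by linarith
    simp [ht, hδ0]
  · set L : ℝ := (t - s) / (t + δ - s) with hL
    have hden : 0 < t + δ - s := by linarith
    have hL0 : 0 ≤ L := div_nonneg (by linarith) hden.le
    have hLle : L ≤ 1 := by rw [hL, div_le_one hden]; linarith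
    have hL1 : 0 ≤ 1 - L := by linarith
    have key1 := hconv.2 (Set.mem_Ici.2 hs) (Set.mem_Ici.2 (by linarith : (0:ℝ) ≤ t + δ))
      hL0 hL1 (by ring)
    have key2 := hconv.2 (Set.mem_Ici.2 hs) (Set.mem_Ici.2 (by linarith : (0:ℝ) ≤ t + δ))
      hL1 hL0 (by ring)
    simp only [smul_eq_mul] at key1 key2
    have e1 : L * s + (1 - L) * (t + δ) = s + δ := by
      field_simp [hL]
      have hLm : L * (t + δ - s) = t - s := by rw [hL]; exact div_mul_cancel₀ _ hden.ne'
      linear_combination (-1:ℝ) * hLm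
    have e2 : (1 - L) * s + L * (t + δ) = t := by
      field_simp [hL]
      have hLm : L * (t + δ - s) = t - s := by rw [hL]; exact div_mul_cancel₀ _ hden.ne'
      linear_combination hLm
    rw [e1] at key1
    rw [e2] at key2
    linarith

private lemma move_sum {n : ℕ} {β : Type*} [DecidableEq β] (p : Fin n → ℝ)
    (g g' : Fin n → β) (D : Finset (Fin n)) (v : β)
    (hg' : ∀ j, g' j = if j ∈ D then v else g j) (i : β) :
    ∑ j ∈ univ.filter (fun j => g' j = i), p j
      = ∑ j ∈ univ.filter (fun j => g j = i), p j
        - (∑ j ∈ D.filter (fun j => g j = i), p j)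
        + (if v = i then ∑ j ∈ D, p j else 0) := by
  classical
  have hDuniv : D ⊆ univ := subset_univ D
  have split : ∀ (F : Fin n → ℝ), ∑ j : Fin n, F j
      = ∑ j ∈ D, F j + ∑ j ∈ univ.filter (fun j => j ∉ D), F j := by
    intro F
    rw [← Finset.sum_filter_add_sum_filter_not univ (fun j => j ∈ D) F]
    congr 1
    congr 1
    ext j
    simp
  rw [Finset.sum_filter, Finset.sum_filter (fun j => g j = i), Finset.sum_filter (fun j => g j = i)]
  rw [split (fun j => if g' j = i then p j else 0), split (fun j => if g j = i then p j else 0)]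
  have h1 : ∑ j ∈ D, (if g' j = i then p j else 0) = if v = i then ∑ j ∈ D, p j else 0 := by
    by_cases hvi : v = i
    · simp only [hvi, if_true]
      apply Finset.sum_congr rfl
      intro j hj
      simp [hg' j, hj, hvi]
    · simp only [hvi, if_false]
      apply Finset.sum_eq_zero
      intro j hj
      simp [hg' j, hj, hvi]
  have h2 : ∀ j ∈ univ.filter (fun j => j ∉ D), (if g' j = i then p j else 0)
      = (if g j = i then p j else 0) := by
    intro j hj
    simp only [mem_filter] at hj
    simp [hg' j, hj.2]
  rw [h1, Finset.sum_congr rfl h2]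
  ring


private lemma pick_b1 {m n : ℕ} (UB : ℝ) (hUB : 0 < UB) (p : Fin n → ℝ) (hp : ∀ j, 0 < p j)
    (htotm : (∑ j, p j) ≤ m * UB) (σ : Fin n → Fin m) (b : Fin m)
    (hmb : 2 * UB < ∑ j ∈ univ.filter (fun j => σ j = b), p j) :
    ∃ b1, b1 ≠ b ∧ (∑ j ∈ univ.filter (fun j => σ j = b1), p j) < UB := by
  classical
  set mass : Fin m → ℝ := fun c => ∑ j ∈ univ.filter (fun j => σ j = c), p j with hmass
  have hmassnn : ∀ c, 0 ≤ mass c := fun c => Finset.sum_nonneg (fun j _ => (hp j).le)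
  have hsum : ∑ c : Fin m, mass c = ∑ j, p j :=
    Finset.sum_fiberwise_of_maps_to (fun j _ => mem_univ (σ j)) p
  have hbT : mass b ≤ ∑ j, p j := by
    rw [← hsum]
    exact Finset.single_le_sum (fun c _ => hmassnn c) (mem_univ b)
  have hm2 : (2:ℝ) < m := by
    have h1 : 2 * UB < m * UB := lt_of_lt_of_le (lt_of_lt_of_le hmb hbT) htotm
    nlinarith
  have hm2' : 2 < m := by exact_mod_cast hm2
  have hne : (univ.erase b).Nonempty := by
    rw [← Finset.card_pos, Finset.card_erase_of_mem (mem_univ b), Finset.card_univ,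
      Fintype.card_fin]
    omega
  obtain ⟨b1, hb1mem, hb1min⟩ := Finset.exists_min_image (univ.erase b) mass hne
  have hb1ne : b1 ≠ b := (Finset.mem_erase.1 hb1mem).1
  refine ⟨b1, hb1ne, ?_⟩
  by_contra hcon
  push_neg at hcon
  have hcard : (univ.erase b).card = m - 1 := by
    rw [Finset.card_erase_of_mem (mem_univ b), Finset.card_univ, Fintype.card_fin]
  have hnsmul : (univ.erase b).card • mass b1 ≤ ∑ c ∈ univ.erase b, mass c :=
    Finset.card_nsmul_le_sum _ _ _ (fun c hc => hb1min c hc)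
  have hrest : ∑ c ∈ univ.erase b, mass c = (∑ j, p j) - mass b := by
    have := Finset.add_sum_erase univ mass (mem_univ b)
    rw [hsum] at this
    linarith
  rw [hcard, hrest, nsmul_eq_mul] at hnsmul
  have hcast : ((m - 1 : ℕ) : ℝ) = (m : ℝ) - 1 := by
    have : 1 ≤ m := by omega
    push_cast [this]
    ring
  rw [hcast] at hnsmul
  nlinarith [hnsmul, hcon, hmb, htotm, hUB, hm2]

private lemma exchange_cost {pp UB : ℝ} (hpp : 1 < pp) (hUB : 0 < UB)
    {k m n : ℕ} (hk : 0 < k)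
    {p : Fin n → ℝ} (hp : ∀ j, 0 < p j)
    (htot : (∑ j, p j) ≤ k * UB)
    {σ σ' : Fin n → Fin m} {b b1 : Fin m} (hbb1 : b1 ≠ b)
    {R : Finset (Fin n)} (hRb : ∀ j ∈ R, σ j = b)
    (hσ' : ∀ j, σ' j = if j ∈ R then b1 else σ j)
    (hr : 0 < ∑ j ∈ R, p j)
    (hbig : 2 * UB < (∑ j ∈ univ.filter (fun j => σ j = b), p j) - ∑ j ∈ R, p j)
    (hm1 : (∑ j ∈ univ.filter (fun j => σ j = b1), p j) < UB)
    {κ : ℕ} (hκk : k ≤ κ) (τ : Fin m → Fin κ) :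
    ∃ τ' : Fin m → Fin κ,
      ∑ i : Fin κ, (∑ j ∈ univ.filter (fun j => τ' (σ' j) = i), p j) ^ pp
        ≤ ∑ i : Fin κ, (∑ j ∈ univ.filter (fun j => τ (σ j) = i), p j) ^ pp := by
  classical
  have hκ0 : 0 < κ := lt_of_lt_of_le hk hκk
  set r : ℝ := ∑ j ∈ R, p j with hrdef
  set Mb : ℝ := ∑ j ∈ univ.filter (fun j => σ j = b), p j with hMbdef
  set m1 : ℝ := ∑ j ∈ univ.filter (fun j => σ j = b1), p j with hm1def
  set L : Fin κ → ℝ := fun i => ∑ j ∈ univ.filter (fun j => τ (σ j) = i), p j with hLdef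
  set X : Fin κ := τ b with hX
  set Y : Fin κ := τ b1 with hY
  have hLnn : ∀ i, 0 ≤ L i := fun i => Finset.sum_nonneg (fun j _ => (hp j).le)
  have hm1nn : 0 ≤ m1 := Finset.sum_nonneg (fun j _ => (hp j).le)
  have hMbX : Mb ≤ L X := by
    apply Finset.sum_le_sum_of_subset_of_nonneg
    · intro j hj
      simp only [mem_filter, mem_univ, true_and] at hj ⊢
      rw [hj]
    · intro j _ _; exact (hp j).le
  have hm1Y : m1 ≤ L Y := by
    apply Finset.sum_le_sum_of_subset_of_nonneg
    · intro j hj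
      simp only [mem_filter, mem_univ, true_and] at hj ⊢
      rw [hj]
    · intro j _ _; exact (hp j).le
  have hLsum : ∑ i : Fin κ, L i = ∑ j, p j :=
    Finset.sum_fiberwise_of_maps_to (fun j _ => mem_univ (τ (σ j))) p
  have hXL : 2 * UB + r < L X := by
    have h1 : 2 * UB + r < Mb := by linarith
    linarith
  -- min-load machine
  obtain ⟨W, -, hWmin⟩ := Finset.exists_min_image univ L ⟨⟨0, hκ0⟩, mem_univ _⟩
  have hWUB : L W ≤ UB := by
    by_contra hcon
    push_neg at hcon
    have h1 : (κ : ℝ) * UB < ∑ i : Fin κ, L i := by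
      calc (κ : ℝ) * UB < (κ : ℝ) * L W := by
            apply mul_lt_mul_of_pos_left hcon
            exact_mod_cast hκ0
        _ = ∑ _i : Fin κ, L W := by
            rw [Finset.sum_const, Finset.card_univ, Fintype.card_fin, nsmul_eq_mul]
        _ ≤ ∑ i : Fin κ, L i := Finset.sum_le_sum (fun i _ => hWmin i (mem_univ i))
    have h2 : (k : ℝ) * UB ≤ (κ : ℝ) * UB := by
      apply mul_le_mul_of_nonneg_right _ hUB.le
      exact_mod_cast hκk
    rw [hLsum] at h1
    linarith
  -- load formula for τ' = update τ b1 V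
  have key : ∀ V : Fin κ,
      ∀ i, (∑ j ∈ univ.filter (fun j => (Function.update τ b1 V) (σ' j) = i), p j)
        = L i - ((if X = i then r else 0) + (if Y = i then m1 else 0))
            + (if V = i then r + m1 else 0) := by
    intro V i
    set τ' := Function.update τ b1 V with hτ'
    set D : Finset (Fin n) := R ∪ univ.filter (fun j => σ j = b1) with hD
    have hdisj : Disjoint R (univ.filter (fun j => σ j = b1)) := by
      rw [Finset.disjoint_left]
      intro j hjR hjB
      simp only [mem_filter, mem_univ, true_and] at hjB
      exact hbb1 (by rw [← hjB, hRb j hjR])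
    have hg' : ∀ j, τ' (σ' j) = if j ∈ D then V else τ (σ j) := by
      intro j
      by_cases hjR : j ∈ R
      · have h1 : σ' j = b1 := by rw [hσ' j, if_pos hjR]
        rw [h1, if_pos (Finset.mem_union_left _ hjR)]
        simp [hτ']
      · have hσj : σ' j = σ j := by rw [hσ' j, if_neg hjR]
        by_cases hjB : σ j = b1
        · rw [hσj, hjB, if_pos (Finset.mem_union_right _ (by simp [hjB]))]
          simp [hτ']
        · have hnD : j ∉ D := by
            simp only [hD, Finset.mem_union, mem_filter, mem_univ, true_and]
            push_neg
            exact ⟨hjR, hjB⟩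
          rw [hσj, if_neg hnD]
          simp [hτ', Function.update_of_ne hjB]
    rw [move_sum p (fun j => τ (σ j)) (fun j => τ' (σ' j)) D V hg' i]
    have hsplit : ∑ j ∈ D.filter (fun j => τ (σ j) = i), p j
        = (if X = i then r else 0) + (if Y = i then m1 else 0) := by
      rw [hD, Finset.filter_union, Finset.sum_union (Finset.disjoint_filter_filter hdisj)]
      congr 1
      · by_cases hXi : X = i
        · rw [if_pos hXi, Finset.filter_true_of_mem, hrdef]
          intro j hj
          rw [hRb j hj, ← hX, hXi]
        · rw [if_neg hXi, Finset.filter_false_of_mem, Finset.sum_empty]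
          intro j hj
          rw [hRb j hj, ← hX]
          exact hXi
      · by_cases hYi : Y = i
        · rw [if_pos hYi, Finset.filter_true_of_mem, hm1def]
          intro j hj
          simp only [mem_filter, mem_univ, true_and] at hj
          rw [hj, ← hY, hYi]
        · rw [if_neg hYi, Finset.filter_false_of_mem, Finset.sum_empty]
          intro j hj
          simp only [mem_filter, mem_univ, true_and] at hj
          rw [hj, ← hY]
          exact hYi
    have hDsum : ∑ j ∈ D, p j = r + m1 := by
      rw [hD, Finset.sum_union hdisj, hrdef, hm1def]
    rw [hsplit, hDsum]
  -- case analysis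
  by_cases hXY : X = Y
  · -- no machine change needed
    refine ⟨Function.update τ b1 Y, le_of_eq ?_⟩
    apply Finset.sum_congr rfl
    intro i _
    rw [key Y i, ← hXY]
    congr 1
    by_cases hXi : X = i
    · simp only [if_pos hXi]; ring
    · simp only [if_neg hXi]; ring
  · by_cases hY2 : L Y ≤ 2 * UB
    · -- route enlarged bag b1 to Y
      refine ⟨Function.update τ b1 Y, ?_⟩
      have hG : ∀ i, (∑ j ∈ univ.filter (fun j => (Function.update τ b1 Y) (σ' j) = i), p j)
          = L i - (if X = i then r else 0) + (if Y = i then r else 0) := by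
        intro i
        rw [key Y i]
        by_cases hXi : X = i
        · have hYi : ¬ (Y = i) := fun h => hXY (hXi.trans h.symm)
          simp only [if_pos hXi, if_neg hYi]; ring
        · by_cases hYi : Y = i
          · simp only [if_neg hXi, if_pos hYi]; ring
          · simp only [if_neg hXi, if_neg hYi]; ring
      have hrw : ∑ i : Fin κ, (∑ j ∈ univ.filter (fun j => (Function.update τ b1 Y) (σ' j) = i), p j) ^ pp
          = ∑ i : Fin κ, (L i - (if X = i then r else 0) + (if Y = i then r else 0)) ^ pp :=
        Finset.sum_congr rfl (fun i _ => by rw [hG i])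
      rw [hrw]
      have hsupp : ∑ i : Fin κ, ((L i - (if X = i then r else 0) + (if Y = i then r else 0)) ^ pp - (L i) ^ pp)
          = ∑ i ∈ ({X, Y} : Finset (Fin κ)), ((L i - (if X = i then r else 0) + (if Y = i then r else 0)) ^ pp - (L i) ^ pp) := by
        symm
        apply Finset.sum_subset (subset_univ _)
        intro i _ hi
        simp only [mem_insert, mem_singleton] at hi
        push_neg at hi
        rw [if_neg (fun h => hi.1 h.symm), if_neg (fun h => hi.2 h.symm)]
        ring
      have hpair : ∑ i ∈ ({X, Y} : Finset (Fin κ)), ((L i - (if X = i then r else 0) + (if Y = i then r else 0)) ^ pp - (L i) ^ pp)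
          = ((L X - r) ^ pp - (L X) ^ pp) + ((L Y + r) ^ pp - (L Y) ^ pp) := by
        rw [Finset.sum_pair hXY]
        have h1 : ¬ (Y = X) := fun h => hXY h.symm
        have h2 : ¬ (X = Y) := hXY
        rw [if_pos rfl, if_pos rfl, if_neg h1, if_neg h2]
        ring_nf
      have hslope := slope_ineq hpp.le (hLnn Y) (by linarith : L Y ≤ L X - r) hr.le
      have heq : L X - r + r = L X := by ring
      rw [heq] at hslope
      have hdiff := Finset.sum_sub_distrib (s := (univ : Finset (Fin κ)))
        (f := fun i => (L i - (if X = i then r else 0) + (if Y = i then r else 0)) ^ pp)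
        (g := fun i => (L i) ^ pp)
      rw [hsupp, hpair] at hdiff
      linarith
    · -- route enlarged bag b1 to min machine W
      push_neg at hY2
      have hWX : W ≠ X := by
        intro h
        have h2 : L W < L X := by linarith
        rw [h] at h2
        exact lt_irrefl _ h2
      have hWY : W ≠ Y := by
        intro h
        have h2 : L W < L Y := by linarith
        rw [h] at h2
        exact lt_irrefl _ h2
      refine ⟨Function.update τ b1 W, ?_⟩
      have hG : ∀ i, (∑ j ∈ univ.filter (fun j => (Function.update τ b1 W) (σ' j) = i), p j)
          = L i - (if X = i then r else 0) - (if Y = i then m1 else 0)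
            + (if W = i then r + m1 else 0) := by
        intro i
        rw [key W i]
        ring
      have hrw : ∑ i : Fin κ, (∑ j ∈ univ.filter (fun j => (Function.update τ b1 W) (σ' j) = i), p j) ^ pp
          = ∑ i : Fin κ, (L i - (if X = i then r else 0) - (if Y = i then m1 else 0)
            + (if W = i then r + m1 else 0)) ^ pp :=
        Finset.sum_congr rfl (fun i _ => by rw [hG i])
      rw [hrw]
      set G : Fin κ → ℝ := fun i => L i - (if X = i then r else 0) - (if Y = i then m1 else 0)
            + (if W = i then r + m1 else 0) with hGdef
      have hsupp : ∑ i : Fin κ, ((G i) ^ pp - (L i) ^ pp)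
          = ∑ i ∈ ({X, Y, W} : Finset (Fin κ)), ((G i) ^ pp - (L i) ^ pp) := by
        symm
        apply Finset.sum_subset (subset_univ _)
        intro i _ hi
        simp only [mem_insert, mem_singleton] at hi
        push_neg at hi
        have e1 : ¬ (X = i) := fun h => hi.1 h.symm
        have e2 : ¬ (Y = i) := fun h => hi.2.1 h.symm
        have e3 : ¬ (W = i) := fun h => hi.2.2 h.symm
        have : G i = L i := by
          rw [hGdef]
          simp only [if_neg e1, if_neg e2, if_neg e3]
          ring
        rw [this]
        ring
      have hXnotin : X ∉ ({Y, W} : Finset (Fin κ)) := by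
        simp only [mem_insert, mem_singleton]
        push_neg
        exact ⟨hXY, fun h => hWX h.symm⟩
      have hYnotin : Y ∉ ({W} : Finset (Fin κ)) := by
        simp only [mem_singleton]
        exact fun h => hWY h.symm
      have htriple : ∑ i ∈ ({X, Y, W} : Finset (Fin κ)), ((G i) ^ pp - (L i) ^ pp)
          = ((G X) ^ pp - (L X) ^ pp) + ((G Y) ^ pp - (L Y) ^ pp) + ((G W) ^ pp - (L W) ^ pp) := by
        rw [Finset.sum_insert hXnotin, Finset.sum_insert hYnotin, Finset.sum_singleton]
        ring
      have hYX' : ¬ (Y = X) := fun h => hXY h.symm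
      have hXY' : ¬ (X = Y) := hXY
      have hWX' : ¬ (W = X) := hWX
      have hWY' : ¬ (W = Y) := hWY
      have hXW' : ¬ (X = W) := fun h => hWX h.symm
      have hYW' : ¬ (Y = W) := fun h => hWY h.symm
      have hGX : G X = L X - r := by
        rw [hGdef]
        simp only [if_pos rfl, eq_self_iff_true, if_true, if_neg hYX', if_neg hWX']
        ring
      have hGY : G Y = L Y - m1 := by
        rw [hGdef]
        simp only [if_pos rfl, eq_self_iff_true, if_true, if_neg hXY', if_neg hWY']
        ring
      have hGW : G W = L W + m1 + r := by
        rw [hGdef]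
        simp only [if_pos rfl, eq_self_iff_true, if_true, if_neg hXW', if_neg hYW']
        ring
      have hslope1 : (L W + m1) ^ pp + (L Y - m1) ^ pp ≤ (L W) ^ pp + (L Y) ^ pp := by
        have h := slope_ineq hpp.le (hLnn W) (by linarith : L W ≤ L Y - m1) hm1nn
        have he : L Y - m1 + m1 = L Y := by ring
        rw [he] at h
        exact h
      have hslope2 : (L W + m1 + r) ^ pp + (L X - r) ^ pp ≤ (L W + m1) ^ pp + (L X) ^ pp := by
        have hs0 : 0 ≤ L W + m1 := by linarith [hLnn W]
        have hst : L W + m1 ≤ L X - r := by linarith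
        have h := slope_ineq hpp.le hs0 hst hr.le
        have he : L X - r + r = L X := by ring
        rw [he] at h
        exact h
      have hdiff := Finset.sum_sub_distrib (s := (univ : Finset (Fin κ)))
        (f := fun i => (G i) ^ pp) (g := fun i => (L i) ^ pp)
      rw [hsupp, htriple, hGX, hGY, hGW] at hdiff
      linarith


theorem stmt17 (pp UB : ℝ) (hpp : 1 < pp) (hUB : 0 < UB)
    (k m : ℕ) (hk : 0 < k) (hkm : k ≤ m)
    (n : ℕ) (p : Fin n → ℝ) (hp : ∀ j, 0 < p j)
    (htot : (∑ j, p j) ≤ k * UB)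
    (S : Finset ℕ) (hS : ∀ κ ∈ S, k ≤ κ ∧ κ ≤ m)
    (C : ℕ → ℝ) (hC : ∀ κ ∈ S, 0 < C κ)
    (σ₀ : Fin n → Fin m)
    (hσ₀ : ∀ κ ∈ S, ∃ τ : Fin m → Fin κ,
      (∑ i : Fin κ, (∑ j ∈ Finset.univ.filter (fun j => τ (σ₀ j) = i), p j) ^ pp) ^ (1 / pp)
        ≤ C κ) :
    ∃ σ : Fin n → Fin m,
      (∀ κ ∈ S, ∃ τ : Fin m → Fin κ,
        (∑ i : Fin κ, (∑ j ∈ Finset.univ.filter (fun j => τ (σ j) = i), p j) ^ pp) ^ (1 / pp)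
          ≤ C κ) ∧
      (∀ j j', 2 * UB < p j → σ j' = σ j → j' = j) ∧
      (∀ b : Fin m, (∀ j, σ j = b → p j ≤ 2 * UB) →
        (∑ j ∈ Finset.univ.filter (fun j => σ j = b), p j) ≤ 4 * UB) := by
  classical
  have hppos : 0 < pp := by linarith
  have hexp : (0:ℝ) ≤ 1 / pp := by positivity
  have htotm : (∑ j, p j) ≤ m * UB := by
    refine le_trans htot ?_
    apply mul_le_mul_of_nonneg_right _ hUB.le
    exact_mod_cast hkm
  -- the Good predicate
  set Good : (Fin n → Fin m) → Prop := fun σ => ∀ κ ∈ S, ∃ τ : Fin m → Fin κ,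
      (∑ i : Fin κ, (∑ j ∈ Finset.univ.filter (fun j => τ (σ j) = i), p j) ^ pp) ^ (1 / pp)
        ≤ C κ with hGooddef
  set bad : (Fin n → Fin m) → Finset (Fin n) := fun σ =>
      Finset.univ.filter (fun x => 2 * UB < p x ∧ ∃ w, w ≠ x ∧ σ w = σ x) with hbaddef
  set sq : (Fin n → Fin m) → ℝ := fun σ =>
      ∑ c : Fin m, (∑ j ∈ Finset.univ.filter (fun j => σ j = c), p j) ^ 2 with hsqdef
  -- a Good σ' obtained from exchange
  have hexchange : ∀ σ : Fin n → Fin m, Good σ → ∀ (b b1 : Fin m), b1 ≠ b →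
      ∀ (R : Finset (Fin n)), (∀ j ∈ R, σ j = b) →
      0 < (∑ j ∈ R, p j) →
      2 * UB < (∑ j ∈ Finset.univ.filter (fun j => σ j = b), p j) - (∑ j ∈ R, p j) →
      (∑ j ∈ Finset.univ.filter (fun j => σ j = b1), p j) < UB →
      Good (fun x => if x ∈ R then b1 else σ x) := by
    intro σ hσGood b b1 hb1 R hRb hr hbig hm1 κ hκ
    obtain ⟨τ, hτ⟩ := hσGood κ hκ
    obtain ⟨τ', hle⟩ := exchange_cost hpp hUB hk hp htot hb1 hRb (fun j => rfl) hr hbig hm1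
      (hS κ hκ).1 τ
    refine ⟨τ', le_trans ?_ hτ⟩
    apply Real.rpow_le_rpow _ hle hexp
    apply Finset.sum_nonneg
    intro i _
    apply Real.rpow_nonneg
    exact Finset.sum_nonneg (fun j _ => (hp j).le)
  -- minimizers
  have hσ₀mem : σ₀ ∈ (Finset.univ.filter Good) := Finset.mem_filter.2 ⟨Finset.mem_univ _, hσ₀⟩
  obtain ⟨σ1, hσ1mem, hσ1min⟩ := Finset.exists_min_image (Finset.univ.filter Good)
    (fun σ => (bad σ).card) ⟨σ₀, hσ₀mem⟩
  obtain ⟨σA, hσAmem, hσAmin⟩ := Finset.exists_min_image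
    ((Finset.univ.filter Good).filter (fun σ => (bad σ).card ≤ (bad σ1).card)) sq
    ⟨σ1, Finset.mem_filter.2 ⟨hσ1mem, le_refl _⟩⟩
  have hσAGood : Good σA := (Finset.mem_filter.1 (Finset.mem_filter.1 hσAmem).1).2
  have hσAcard : (bad σA).card ≤ (bad σ1).card := (Finset.mem_filter.1 hσAmem).2
  -- no huge job in a small bag
  have hhuge_not_small : ∀ (σ : Fin n → Fin m) (b1 : Fin m) (x : Fin n),
      (∑ j ∈ Finset.univ.filter (fun j => σ j = b1), p j) < UB → σ x = b1 → ¬ (2 * UB < p x) := by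
    intro σ b1 x hm1 hx hcon
    have : p x ≤ ∑ j ∈ Finset.univ.filter (fun j => σ j = b1), p j :=
      Finset.single_le_sum (fun i _ => (hp i).le)
        (Finset.mem_filter.2 ⟨Finset.mem_univ _, hx⟩)
    linarith
  refine ⟨σA, hσAGood, ?_, ?_⟩
  · -- huge jobs isolated
    intro j j' hj hjj'
    by_contra hne
    set b : Fin m := σA j with hbdef
    set R : Finset (Fin n) := (Finset.univ.filter (fun x => σA x = b)).erase j with hRdef
    have hRb : ∀ x ∈ R, σA x = b := by
      intro x hx
      exact (Finset.mem_filter.1 (Finset.mem_erase.1 hx).2).2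
    have hj'R : j' ∈ R := Finset.mem_erase.2 ⟨hne, Finset.mem_filter.2 ⟨Finset.mem_univ _, hjj'⟩⟩
    have hrpos : 0 < ∑ x ∈ R, p x := Finset.sum_pos (fun i _ => hp i) ⟨j', hj'R⟩
    have hjmem : j ∈ Finset.univ.filter (fun x => σA x = b) :=
      Finset.mem_filter.2 ⟨Finset.mem_univ _, rfl⟩
    have hMbsplit : p j + ∑ x ∈ R, p x = ∑ x ∈ Finset.univ.filter (fun x => σA x = b), p x :=
      Finset.add_sum_erase _ _ hjmem
    have hbig : 2 * UB < (∑ x ∈ Finset.univ.filter (fun x => σA x = b), p x) - ∑ x ∈ R, p x := by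
      linarith
    obtain ⟨b1, hb1ne, hm1⟩ := pick_b1 UB hUB p hp htotm σA b (by linarith)
    set σB : Fin n → Fin m := fun x => if x ∈ R then b1 else σA x with hσBdef
    have hGoodB : Good σB := hexchange σA hσAGood b b1 hb1ne R hRb hrpos hbig hm1
    -- bad σB ⊂ bad σA
    have hsub : bad σB ⊆ bad σA := by
      intro x hx
      obtain ⟨-, hhuge, w, hwne, hww⟩ := Finset.mem_filter.1 hx
      refine Finset.mem_filter.2 ⟨Finset.mem_univ _, hhuge, ?_⟩
      by_cases hxR : x ∈ R
      · exact ⟨j, Ne.symm (Finset.mem_erase.1 hxR).1, (hRb x hxR).symm⟩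
      · have hσBx : σB x = σA x := if_neg hxR
        have hxb1 : σA x ≠ b1 := fun h => hhuge_not_small σA b1 x hm1 h hhuge
        by_cases hwR : w ∈ R
        · exfalso
          apply hxb1
          have : σB w = b1 := if_pos hwR
          rw [this, hσBx] at hww
          exact hww.symm
        · have hσBw : σB w = σA w := if_neg hwR
          rw [hσBw, hσBx] at hww
          exact ⟨w, hwne, hww⟩
    have hjin : j ∈ bad σA := Finset.mem_filter.2 ⟨Finset.mem_univ _, hj, j', hne, hjj'⟩
    have hjout : j ∉ bad σB := by
      intro hmem
      obtain ⟨-, -, w, hwne, hww⟩ := Finset.mem_filter.1 hmem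
      have hjR : j ∉ R := Finset.notMem_erase _ _
      have hσBj : σB j = b := if_neg hjR
      by_cases hwR : w ∈ R
      · have : σB w = b1 := if_pos hwR
        rw [this, hσBj] at hww
        exact hb1ne hww
      · have hσBw : σB w = σA w := if_neg hwR
        rw [hσBw, hσBj] at hww
        exact hwR (Finset.mem_erase.2 ⟨hwne, Finset.mem_filter.2 ⟨Finset.mem_univ _, hww⟩⟩)
    have hlt : (bad σB).card < (bad σA).card := by
      apply Finset.card_lt_card
      exact Finset.ssubset_iff_of_subset hsub |>.2 ⟨j, hjin, hjout⟩
    have hB1 : (bad σ1).card ≤ (bad σB).card :=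
      hσ1min σB (Finset.mem_filter.2 ⟨Finset.mem_univ _, hGoodB⟩)
    omega
  · -- small bags not too large
    intro b hsmall
    by_contra hgt
    push_neg at hgt
    have hMbpos : (0:ℝ) < ∑ j ∈ Finset.univ.filter (fun j => σA j = b), p j := by linarith
    have hnonempty : (Finset.univ.filter (fun j => σA j = b)).Nonempty :=
      Finset.nonempty_of_sum_ne_zero hMbpos.ne'
    obtain ⟨jj, hjjmem⟩ := hnonempty
    have hjjb : σA jj = b := (Finset.mem_filter.1 hjjmem).2
    have hjj2 : p jj ≤ 2 * UB := hsmall jj hjjb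
    set R : Finset (Fin n) := {jj} with hRdef
    have hRb : ∀ x ∈ R, σA x = b := by
      intro x hx
      rw [Finset.mem_singleton.1 hx]
      exact hjjb
    have hrsum : ∑ x ∈ R, p x = p jj := Finset.sum_singleton _ _
    have hrpos : 0 < ∑ x ∈ R, p x := by rw [hrsum]; exact hp jj
    have hbig : 2 * UB < (∑ x ∈ Finset.univ.filter (fun x => σA x = b), p x) - ∑ x ∈ R, p x := by
      rw [hrsum]; linarith
    obtain ⟨b1, hb1ne, hm1⟩ := pick_b1 UB hUB p hp htotm σA b (by linarith)
    set σB : Fin n → Fin m := fun x => if x ∈ R then b1 else σA x with hσBdef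
    have hGoodB : Good σB := hexchange σA hσAGood b b1 hb1ne R hRb hrpos hbig hm1
    -- bad σB ⊆ bad σA
    have hsub : bad σB ⊆ bad σA := by
      intro x hx
      obtain ⟨-, hhuge, w, hwne, hww⟩ := Finset.mem_filter.1 hx
      refine Finset.mem_filter.2 ⟨Finset.mem_univ _, hhuge, ?_⟩
      have hxjj : x ∉ R := by
        rw [hRdef, Finset.mem_singleton]
        intro h
        rw [h] at hhuge
        linarith
      have hσBx : σB x = σA x := if_neg hxjj
      have hxb1 : σA x ≠ b1 := fun h => hhuge_not_small σA b1 x hm1 h hhuge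
      by_cases hwR : w ∈ R
      · exfalso
        apply hxb1
        have : σB w = b1 := if_pos hwR
        rw [this, hσBx] at hww
        exact hww.symm
      · have hσBw : σB w = σA w := if_neg hwR
        rw [hσBw, hσBx] at hww
        exact ⟨w, hwne, hww⟩
    have hmemB : σB ∈ (Finset.univ.filter Good).filter (fun σ => (bad σ).card ≤ (bad σ1).card) :=
      Finset.mem_filter.2 ⟨Finset.mem_filter.2 ⟨Finset.mem_univ _, hGoodB⟩,
        le_trans (Finset.card_le_card hsub) hσAcard⟩
    have hsqmin : sq σA ≤ sq σB := hσAmin σB hmemB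
    -- compute sq σB < sq σA
    have hmass : ∀ c, (∑ j ∈ Finset.univ.filter (fun j => σB j = c), p j)
        = (∑ j ∈ Finset.univ.filter (fun j => σA j = c), p j)
          - (if b = c then p jj else 0) + (if b1 = c then p jj else 0) := by
      intro c
      have := move_sum p σA σB R b1 (fun x => rfl) c
      rw [this, hrsum]
      congr 2
      rw [hRdef, Finset.filter_singleton]
      by_cases hc : σA jj = c
      · rw [if_pos hc, Finset.sum_singleton, if_pos (hjjb ▸ hc)]
      · rw [if_neg hc, Finset.sum_empty, if_neg (fun h => hc (hjjb.symm ▸ h))]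
    have hsqlt : sq σB < sq σA := by
      rw [hsqdef]
      have hsplit : (∑ c : Fin m, (∑ j ∈ Finset.univ.filter (fun j => σB j = c), p j) ^ 2)
          - (∑ c : Fin m, (∑ j ∈ Finset.univ.filter (fun j => σA j = c), p j) ^ 2)
          = ∑ c ∈ ({b, b1} : Finset (Fin m)),
            ((∑ j ∈ Finset.univ.filter (fun j => σB j = c), p j) ^ 2
              - (∑ j ∈ Finset.univ.filter (fun j => σA j = c), p j) ^ 2) := by
        rw [← Finset.sum_sub_distrib]
        symm
        apply Finset.sum_subset (Finset.subset_univ _)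
        intro c _ hc
        simp only [Finset.mem_insert, Finset.mem_singleton] at hc
        push_neg at hc
        rw [hmass c, if_neg (fun h => hc.1 h.symm), if_neg (fun h => hc.2 h.symm)]
        ring
      have hpairne : b ≠ b1 := fun h => hb1ne h.symm
      rw [Finset.sum_pair hpairne] at hsplit
      have hvb : (∑ j ∈ Finset.univ.filter (fun j => σB j = b), p j)
          = (∑ j ∈ Finset.univ.filter (fun j => σA j = b), p j) - p jj := by
        rw [hmass b, if_pos rfl, if_neg hb1ne]
        ring
      have hvb1 : (∑ j ∈ Finset.univ.filter (fun j => σB j = b1), p j)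
          = (∑ j ∈ Finset.univ.filter (fun j => σA j = b1), p j) + p jj := by
        rw [hmass b1, if_pos rfl, if_neg hpairne]
        ring
      rw [hvb, hvb1] at hsplit
      have hkey : ((∑ j ∈ Finset.univ.filter (fun j => σA j = b), p j) - p jj) ^ 2
            - (∑ j ∈ Finset.univ.filter (fun j => σA j = b), p j) ^ 2
          + (((∑ j ∈ Finset.univ.filter (fun j => σA j = b1), p j) + p jj) ^ 2
            - (∑ j ∈ Finset.univ.filter (fun j => σA j = b1), p j) ^ 2) < 0 := by
        nlinarith [hp jj, hjj2, hm1, hgt, hUB]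
      have := hsplit
      nlinarith [hkey, hsplit]
    linarith
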